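/- Let Γ be an arbitrary group. Then Γ is nilpotent if and only if there exists a normal subgroup N of Γ such that N is nilpotent and the quotient group Γ/[N,N] is nilpotent, where [N,N] denotes the commutator subgroup of N (which is normal in Γ since N is). -/

import Mathlib

open Subgroup

namespace HallAux

variable {G : Type*} [Group G]

lemma normal_iSup {ι : Sort*} (A : ι → Subgroup G) (h : ∀ i, (A i).Normal) :
    (⨆ i, A i).Normal := by
  constructor
  intro n hn g
  refine Subgroup.iSup_induction A (C := fun x => g * x * g⁻¹ ∈ ⨆ i, A i) hn
    (fun i x hx => le_iSup A i ((h i).conj_mem x hx g)) (by simpa using one_mem _) ?_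
  intro x y hx hy
  have hxy : g * (x * y) * g⁻¹ = (g * x * g⁻¹) * (g * y * g⁻¹) := by group
  rw [hxy]; exact mul_mem hx hy

lemma map_comm_iff {L : Subgroup G} (hL : L.Normal) {A B : Subgroup G} :
    ⁅A, B⁆ ≤ L ↔
      ⁅Subgroup.map (QuotientGroup.mk' L) A, Subgroup.map (QuotientGroup.mk' L) B⁆ = ⊥ := by
  haveI := hL
  rw [← Subgroup.map_commutator, Subgroup.map_eq_bot_iff, QuotientGroup.ker_mk']

/-- Three subgroups lemma, `≤` form. -/
lemma three_le {H₁ H₂ H₃ L : Subgroup G} (hL : L.Normal)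
    (h1 : ⁅⁅H₂, H₃⁆, H₁⁆ ≤ L) (h2 : ⁅⁅H₃, H₁⁆, H₂⁆ ≤ L) : ⁅⁅H₁, H₂⁆, H₃⁆ ≤ L := by
  haveI := hL
  rw [map_comm_iff hL, Subgroup.map_commutator] at h1 h2 ⊢
  exact Subgroup.commutator_commutator_eq_bot_of_rotate h1 h2

lemma commutator_iSup_le {ι : Sort*} {A : ι → Subgroup G} {K X : Subgroup G} (hX : X.Normal)
    (h : ∀ i, ⁅A i, K⁆ ≤ X) : ⁅⨆ i, A i, K⁆ ≤ X := by
  haveI := hX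
  have key : ∀ {H : Subgroup G}, ⁅H, K⁆ ≤ X ↔
      Subgroup.map (QuotientGroup.mk' X) H ≤
        centralizer (Subgroup.map (QuotientGroup.mk' X) K : Subgroup (G ⧸ X)) := by
    intro H
    rw [map_comm_iff hX, Subgroup.commutator_eq_bot_iff_le_centralizer]
  rw [key, Subgroup.map_iSup]
  exact iSup_le fun i => key.mp (h i)

lemma commutator_sup_le {A B K X : Subgroup G} (hX : X.Normal)
    (hA : ⁅A, K⁆ ≤ X) (hB : ⁅B, K⁆ ≤ X) : ⁅A ⊔ B, K⁆ ≤ X := by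
  haveI := hX
  have key : ∀ {H : Subgroup G}, ⁅H, K⁆ ≤ X ↔
      Subgroup.map (QuotientGroup.mk' X) H ≤
        centralizer (Subgroup.map (QuotientGroup.mk' X) K : Subgroup (G ⧸ X)) := by
    intro H
    rw [map_comm_iff hX, Subgroup.commutator_eq_bot_iff_le_centralizer]
  rw [key, Subgroup.map_sup]
  exact sup_le (key.mp hA) (key.mp hB)

/-- The lower central series of `N` viewed inside `G`. -/
def chain (N : Subgroup G) : ℕ → Subgroup G
  | 0 => N
  | k + 1 => ⁅chain N k, N⁆

variable {N : Subgroup G}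

lemma chain_normal (hN : N.Normal) : ∀ k, (chain N k).Normal
  | 0 => hN
  | k + 1 => by
      haveI := hN; haveI := chain_normal hN k
      exact Subgroup.commutator_normal _ _

lemma chain_le_self (hN : N.Normal) : ∀ k, chain N k ≤ N
  | 0 => le_rfl
  | k + 1 => by haveI := hN; exact Subgroup.commutator_le_right _ _

lemma chain_succ_le (hN : N.Normal) (k : ℕ) : chain N (k + 1) ≤ chain N k := by
  haveI := chain_normal hN k
  exact Subgroup.commutator_le_left _ _

lemma chain_comm_der (hN : N.Normal) (i : ℕ) :
    ⁅chain N i, ⁅N, N⁆⁆ ≤ chain N (i + 2) := by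
  haveI := hN
  rw [Subgroup.commutator_comm]
  refine three_le (H₁ := N) (H₂ := N) (H₃ := chain N i) (chain_normal hN (i + 2)) ?_ ?_
  · rw [Subgroup.commutator_comm N (chain N i)]
    exact le_rfl
  · exact le_rfl

lemma chain_eq_map (N : Subgroup G) : ∀ k,
    chain N k = Subgroup.map N.subtype ((⊤ : Subgroup ↥N).lowerCentralSeries k)
  | 0 => by
      rw [Subgroup.lowerCentralSeries_zero, ← MonoidHom.range_eq_map, Subgroup.range_subtype]
      rfl
  | k + 1 => by
      show ⁅chain N k, N⁆ = Subgroup.map N.subtype ⁅(⊤ : Subgroup ↥N).lowerCentralSeries k, ⊤⁆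
      rw [Subgroup.map_commutator, ← chain_eq_map N k, ← MonoidHom.range_eq_map,
        Subgroup.range_subtype]

lemma layer (hN : N.Normal) {d : ℕ} (hd : (⊤ : Subgroup G).lowerCentralSeries d ≤ ⁅N, N⁆) :
    ∀ i : ℕ, ∃ (m : ℕ) (U : ℕ → Subgroup G),
      U 0 = chain N i ∧ (∀ k, (U k).Normal) ∧ (∀ k, U k ≤ chain N i) ∧
      (∀ k, ⁅U k, ⊤⁆ ≤ U (k + 1)) ∧ (∀ k, m ≤ k → U k = chain N (i + 1)) := by
  haveI := hN
  set V : ℕ → Subgroup G := fun b => ⁅N, N⁆ ⊔ ((⊤ : Subgroup G).lowerCentralSeries b ⊓ N) with hVdef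
  have hV0 : V 0 = N := by
    rw [hVdef]
    simp only [Subgroup.lowerCentralSeries_zero, top_inf_eq]
    exact sup_eq_right.mpr (Subgroup.commutator_le_right _ _)
  have hVnormal : ∀ b, (V b).Normal := fun b => by
    rw [hVdef]; infer_instance
  have hVle : ∀ b, V b ≤ N := fun b =>
    sup_le (Subgroup.commutator_le_right _ _) inf_le_right
  have hVanti : Antitone V := fun b b' h =>
    sup_le_sup_left (inf_le_inf_right _ (Subgroup.lowerCentralSeries_antitone _ h)) _
  have hVc : ∀ b, ⁅V b, ⊤⁆ ≤ V (b + 1) := by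
    intro b
    refine commutator_sup_le (hVnormal (b + 1)) ?_ ?_
    · exact le_trans (Subgroup.commutator_le_left _ _) le_sup_left
    · refine le_trans (le_inf ?_ ?_) le_sup_right
      · exact Subgroup.commutator_mono inf_le_left le_rfl
      · exact le_trans (Subgroup.commutator_mono inf_le_right le_rfl)
          (Subgroup.commutator_le_left _ _)
  have hVstab : ∀ b, d ≤ b → V b = ⁅N, N⁆ := by
    intro b hb
    rw [hVdef]
    exact sup_eq_left.mpr (le_trans inf_le_left
      (le_trans (Subgroup.lowerCentralSeries_antitone _ hb) hd))
  intro i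
  induction i with
  | zero => exact ⟨d, V, hV0, hVnormal, hVle, hVc, fun k hk => hVstab k hk⟩
  | succ i ih =>
    obtain ⟨m, U, hU0, hUn, hUle, hUc, hUs⟩ := ih
    set W : ℕ → Subgroup G := fun k => chain N (i + 2) ⊔ ⨆ a : ℕ, ⁅U a, V (k - a)⁆ with hWdef
    have hWn : ∀ k, (W k).Normal := by
      intro k
      rw [hWdef]
      haveI : (⨆ a : ℕ, ⁅U a, V (k - a)⁆).Normal := by
        refine normal_iSup _ fun a => ?_
        haveI := hUn a; haveI := hVnormal (k - a)
        infer_instance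
      haveI := chain_normal hN (i + 2)
      infer_instance
    have hWle : ∀ k, W k ≤ chain N (i + 1) := by
      intro k
      refine sup_le (chain_succ_le hN (i + 1)) (iSup_le fun a => ?_)
      exact Subgroup.commutator_mono (hUle a) (hVle _)
    have hW0 : W 0 = chain N (i + 1) := by
      refine le_antisymm (hWle 0) ?_
      have : chain N (i + 1) = ⁅U 0, V (0 - 0)⁆ := by rw [hU0, hV0]; rfl
      rw [this]
      exact le_trans (le_iSup (fun a => ⁅U a, V (0 - a)⁆) 0) le_sup_right
    have hWc : ∀ k, ⁅W k, ⊤⁆ ≤ W (k + 1) := by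
      intro k
      refine commutator_sup_le (hWn (k + 1)) ?_ ?_
      · haveI := chain_normal hN (i + 2)
        exact le_trans (Subgroup.commutator_le_left _ _) le_sup_left
      · refine commutator_iSup_le (hWn (k + 1)) fun a => ?_
        refine three_le (hWn (k + 1)) ?_ ?_
        · -- ⁅⁅V (k-a), ⊤⁆, U a⁆ ≤ W (k+1)
          refine le_trans (Subgroup.commutator_mono (hVc (k - a)) le_rfl) ?_
          rw [Subgroup.commutator_comm]
          have hle : k + 1 - a ≤ k - a + 1 := by omega
          refine le_trans (Subgroup.commutator_mono le_rfl (hVanti hle)) ?_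
          exact le_trans (le_iSup (fun a => ⁅U a, V (k + 1 - a)⁆) a) le_sup_right
        · -- ⁅⁅⊤, U a⁆, V (k-a)⁆ ≤ W (k+1)
          rw [Subgroup.commutator_comm ⊤ (U a)]
          refine le_trans (Subgroup.commutator_mono (hUc a) le_rfl) ?_
          have : k - a = k + 1 - (a + 1) := by omega
          rw [this]
          exact le_trans (le_iSup (fun b => ⁅U b, V (k + 1 - b)⁆) (a + 1)) le_sup_right
    have hWs : ∀ k, m + d ≤ k → W k = chain N (i + 2) := by
      intro k hk
      refine le_antisymm (sup_le le_rfl (iSup_le fun a => ?_)) le_sup_left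
      by_cases ha : m ≤ a
      · rw [hUs a ha]
        exact Subgroup.commutator_mono le_rfl (hVle _)
      · have hb : d ≤ k - a := by omega
        rw [hVstab (k - a) hb]
        exact le_trans (Subgroup.commutator_mono (hUle a) le_rfl) (chain_comm_der hN i)
    exact ⟨m + d, W, hW0, hWn, hWle, hWc, hWs⟩

theorem hall (N : Subgroup G) (hN : N.Normal) (h1 : Group.IsNilpotent ↥N)
    (h2 : Group.IsNilpotent (G ⧸ (⁅N, N⁆ : Subgroup G))) : Group.IsNilpotent G := by
  haveI := hN
  obtain ⟨c, hc⟩ := Subgroup.nilpotent_iff_lowerCentralSeries.mp h1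
  obtain ⟨d, hdq⟩ := Subgroup.nilpotent_iff_lowerCentralSeries.mp h2
  have hd : (⊤ : Subgroup G).lowerCentralSeries d ≤ ⁅N, N⁆ := by
    have hmap := lowerCentralSeries.map (QuotientGroup.mk' (⁅N, N⁆ : Subgroup G)) d
    rw [hdq, le_bot_iff, Subgroup.map_eq_bot_iff, QuotientGroup.ker_mk'] at hmap
    exact hmap
  have hchain : chain N c = ⊥ := by
    rw [chain_eq_map, hc]
    exact Subgroup.map_bot _
  have main : ∀ i, ∃ e, (⊤ : Subgroup G).lowerCentralSeries e ≤ chain N (i + 1) := by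
    intro i
    induction i with
    | zero => exact ⟨d, hd⟩
    | succ i ih =>
      obtain ⟨e, he⟩ := ih
      obtain ⟨m, U, hU0, _, _, hUc, hUs⟩ := layer hN hd (i + 1)
      have key : ∀ k, (⊤ : Subgroup G).lowerCentralSeries (e + k) ≤ U k := by
        intro k
        induction k with
        | zero => rw [hU0]; exact he
        | succ k ihk =>
          exact le_trans (Subgroup.commutator_mono ihk le_rfl) (hUc k)
      exact ⟨e + m, le_trans (key m) (le_of_eq (hUs m le_rfl))⟩
  rw [Subgroup.nilpotent_iff_lowerCentralSeries]
  obtain ⟨e, he⟩ := main c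
  refine ⟨e, le_bot_iff.mp (le_trans he ?_)⟩
  show ⁅chain N c, N⁆ ≤ ⊥
  rw [hchain, Subgroup.commutator_bot_left]

end HallAux

/-- P. Hall's criterion: a group `Γ` is nilpotent if and only if it has a normal
subgroup `N` such that both `N` and `Γ/[N,N]` are nilpotent. -/
theorem stmt9 (Γ : Type*) [Group Γ] :
    Group.IsNilpotent Γ ↔
      ∃ (N : Subgroup Γ) (hN : N.Normal),
        Group.IsNilpotent ↥N ∧
          (haveI := hN; Group.IsNilpotent (Γ ⧸ (⁅N, N⁆ : Subgroup Γ))) := by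
  constructor
  · intro h
    refine ⟨⊥, inferInstance, ?_, ?_⟩
    · infer_instance
    · exact nilpotent_of_surjective _ (QuotientGroup.mk'_surjective _)
  · rintro ⟨N, hN, h1, h2⟩
    exact HallAux.hall N hN h1 h2
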